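/- Let p be an odd prime, v ≥ 2, and g a primitive root modulo p. Then the ElGamal sequence γ_v defined by γ_v(i) = (g^i mod p) mod v for 0 ≤ i < p−1, viewed as a circular sequence of length p−1, has least period exactly p−1. -/

import Mathlib

lemma aux_surj (p g : ℕ) (hp : p.Prime) (hp3 : 3 ≤ p)
    (hg : IsPrimitiveRoot (g : ZMod p) (p - 1)) (x : ZMod p) (hx : x ≠ 0) :
    ∃ i : ℕ, (g : ZMod p) ^ i = x := by
  haveI := Fact.mk hp
  have h0 : 0 < p - 1 := by omega
  have hu : IsUnit (g : ZMod p) := hg.isUnit h0.ne'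
  set u := hu.unit with hu_def
  have horder : orderOf u = p - 1 := by
    rw [← orderOf_units, IsUnit.unit_spec, ← hg.eq_orderOf]
  have hcard : Nat.card (Subgroup.zpowers u) = Nat.card (ZMod p)ˣ := by
    rw [Nat.card_zpowers, horder, Nat.card_eq_fintype_card, ZMod.card_units]
  have htop : Subgroup.zpowers u = ⊤ := Subgroup.eq_top_of_card_eq _ hcard
  have hxu : IsUnit x := isUnit_iff_ne_zero.mpr hx
  have : hxu.unit ∈ Subgroup.zpowers u := htop ▸ Subgroup.mem_top _
  rw [← mem_powers_iff_mem_zpowers] at this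
  obtain ⟨i, hi⟩ := this
  refine ⟨i, ?_⟩
  have := congrArg (Units.val) hi
  simpa [hu_def] using this

/-- The ElGamal sequence `γ_v(i) = (g^i mod p) mod v` has least period exactly `p-1`. -/
theorem stmt_12 (p v g : ℕ) (hp : p.Prime) (hodd : Odd p) (hv : 2 ≤ v)
    (hg : IsPrimitiveRoot (g : ZMod p) (p - 1)) :
    (∀ i : ℕ, (g ^ (i + (p - 1)) % p) % v = (g ^ i % p) % v) ∧
      (∀ N : ℕ, 0 < N → (∀ i : ℕ, (g ^ (i + N) % p) % v = (g ^ i % p) % v) →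
        p - 1 ≤ N) := by
  haveI := Fact.mk hp
  have hp3 : 3 ≤ p := by
    rcases hp.two_le.lt_or_eq with h | h
    · omega
    · exact absurd hodd (by simp [← h])
  have hp0 : 0 < p := by omega
  -- g^(p-1) % p = 1
  have hgp1 : g ^ (p - 1) % p = 1 := by
    have h1 : (g : ZMod p) ^ (p - 1) = 1 := hg.pow_eq_one
    have : ((g ^ (p - 1) : ℕ) : ZMod p) = ((1 : ℕ) : ZMod p) := by push_cast; simpa using h1
    have := (ZMod.natCast_eq_natCast_iff _ _ _).mp this
    have := this.symm
    unfold Nat.ModEq at this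
    have h1p : 1 % p = 1 := Nat.mod_eq_of_lt (by omega)
    omega
  constructor
  · intro i
    rw [pow_add, Nat.mul_mod, hgp1, mul_one, Nat.mod_mod_of_dvd _ dvd_rfl]
  · intro N hN hper
    by_contra hcon
    push_neg at hcon
    set g' := g ^ N % p with hg'def
    have hg'lt : g' < p := Nat.mod_lt _ hp0
    -- g' ≠ 1
    have hg'ne1 : g' ≠ 1 := by
      intro h1
      have : ((g ^ N % p : ℕ) : ZMod p) = ((1 : ℕ) : ZMod p) := by rw [← hg'def, h1]
      rw [ZMod.natCast_mod] at this
      push_cast at this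
      exact hg.pow_ne_one_of_pos_of_lt hN.ne' hcon this
    -- g' ≠ 0
    have hg'ne0 : g' ≠ 0 := by
      intro h0
      have : ((g ^ N % p : ℕ) : ZMod p) = 0 := by rw [← hg'def, h0]; simp
      rw [ZMod.natCast_mod] at this
      push_cast at this
      have hu : IsUnit (g : ZMod p) := hg.isUnit (by omega)
      exact (hu.pow N).ne_zero this
    have hg'2 : 2 ≤ g' := by omega
    -- g' ≡ 1 mod v
    have hg'1 : g' % v = 1 % v := by
      have := hper 0
      simpa [Nat.mod_eq_of_lt (show 1 < p by omega)] using this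
    -- define x
    set x := p / g' + 1 with hxdef
    have hdm := Nat.div_add_mod p g'
    have hmlt : p % g' < g' := Nat.mod_lt _ (by omega)
    have hmul : g' * x = g' * (p / g') + g' := by rw [hxdef, Nat.mul_add, mul_one]
    have hmul' : g' * (p / g') = p / g' * g' := Nat.mul_comm _ _
    have h1 : p < g' * x := by omega
    have h2 : g' * x < 2 * p := by omega
    -- x < p
    have hxlt : x < p := by
      have h5 : 2 * (p / g') ≤ g' * (p / g') := Nat.mul_le_mul_right _ hg'2
      omega
    have hxpos : 0 < x := by rw [hxdef]; exact Nat.succ_pos _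
    -- find i with g^i % p = x
    have hxne : ((x : ℕ) : ZMod p) ≠ 0 := by
      rw [Ne, ZMod.natCast_eq_zero_iff]
      intro hdvd
      exact absurd (Nat.le_of_dvd hxpos hdvd) (by omega)
    obtain ⟨i, hi⟩ := aux_surj p g hp hp3 hg _ hxne
    have hgi : g ^ i % p = x := by
      have : ((g ^ i : ℕ) : ZMod p) = ((x : ℕ) : ZMod p) := by rw [Nat.cast_pow]; exact hi
      have := (ZMod.natCast_eq_natCast_iff _ _ _).mp this
      unfold Nat.ModEq at this
      rwa [Nat.mod_eq_of_lt hxlt] at this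
    -- rewrite the key period equation
    have hkey : (g' * x) % p % v = x % v := by
      have := hper i
      rwa [pow_add, Nat.mul_mod, hgi, ← hg'def, Nat.mul_comm x g'] at this
    have hsub : (g' * x) % p = g' * x - p := by
      rw [Nat.mod_eq_sub_mod (le_of_lt h1), Nat.mod_eq_of_lt (by omega)]
    rw [hsub] at hkey
    -- g' * x ≡ x mod v
    have hgx : (g' * x) % v = x % v := by
      have : g' * x ≡ 1 * x [MOD v] := Nat.ModEq.mul_right x hg'1
      simpa [Nat.ModEq] using this
    -- hence p ≡ 0 mod v
    have hpv : v ∣ p := by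
      have heq : g' * x - p + p = g' * x := by omega
      have h3 : g' * x - p + p ≡ g' * x - p + 0 [MOD v] := by
        show (g' * x - p + p) % v = (g' * x - p + 0) % v
        rw [heq, Nat.add_zero, hgx, hkey]
      have hpv0 : p ≡ 0 [MOD v] := Nat.ModEq.add_left_cancel' _ h3
      exact Nat.modEq_zero_iff_dvd.mp hpv0
    have hvp : v = p := ((Nat.Prime.eq_one_or_self_of_dvd hp v hpv).resolve_left (by omega))
    rw [hvp, Nat.mod_eq_of_lt hg'lt, Nat.mod_eq_of_lt (by omega)] at hg'1
    exact hg'ne1 hg'1
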